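/- For every integer n ≥ 2 there exist real numbers a < α < β < b and a C² function y : (a,b) → (0,∞) such that: (i) y extends continuously to [a,b] with y(a) = y(b) = 0, and y'(x) → +∞ as x → a⁺ and y'(x) → −∞ as x → b⁻ (so y generates a closed C² hypersurface of revolution N₀ ⊂ ℝ^{n+1}); (ii) y''(x)/(1+y'(x)²) < (n−1)/y(x) for all x ∈ (a,b) (so N₀ has positive mean curvature H > 0); (iii) y' ≥ 0 on (a,α], y' ≤ 0 on [β,b), and y'(α) = y'(β) = 0 (so the bridge L₀ of N₀, the complement of its two caps, corresponds to the interval [α,β]); (iv) max_{x∈[α,β]} y(x)√(1+y'(x)²) < n^{n/(2(n−1))} · min_{x∈[α,β]} y(x) (so N₀ is admissible: max_{L̄₀} p / min_{L̄₀} p < n^{n/(2(n−1))} where p = 1/(y√(1+y'²)) is the principal curvature of rotation); and (v) the planar region E = {(x,z) : x ∈ [a,b], |z| ≤ y(x)} is not star-shaped with respect to any of its points (so N₀ is not star-shaped). -/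

import Mathlib

open Set Filter

noncomputable def Uf (x : ℝ) : ℝ := 19773/12800 + (7/12000)*x^6 - (1/64000)*x^8
noncomputable def U1f (x : ℝ) : ℝ := (7/2000)*x^5 - (1/8000)*x^7
noncomputable def U2f (x : ℝ) : ℝ := (7/400)*x^4 - (7/8000)*x^6
noncomputable def Yf (x : ℝ) : ℝ := Real.sqrt (Uf x)
noncomputable def Y1f (x : ℝ) : ℝ := U1f x / (2*Real.sqrt (Uf x))
noncomputable def Y2f (x : ℝ) : ℝ :=
  U2f x/(2*Real.sqrt (Uf x)) - (U1f x)^2/(4*Uf x*Real.sqrt (Uf x))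

lemma hUd (x : ℝ) : HasDerivAt Uf (U1f x) x := by
  have h := ((((hasDerivAt_pow 6 x).const_mul ((7:ℝ)/12000)).const_add (19773/12800)).sub
    ((hasDerivAt_pow 8 x).const_mul ((1:ℝ)/64000)))
  refine h.congr_deriv ?_
  simp [U1f]; ring

lemma hU1d (x : ℝ) : HasDerivAt U1f (U2f x) x := by
  have h := (((hasDerivAt_pow 5 x).const_mul ((7:ℝ)/2000)).sub
    ((hasDerivAt_pow 7 x).const_mul ((1:ℝ)/8000)))
  refine h.congr_deriv ?_
  simp [U2f]; ring

lemma Ucont : Continuous Uf := by unfold Uf; fun_prop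
lemma U1cont : Continuous U1f := by unfold U1f; fun_prop
lemma U2cont : Continuous U2f := by unfold U2f; fun_prop

lemma Upos {x : ℝ} (h : x^2 < 39) : 0 < Uf x := by
  have key : 0 < (39 - x^2)*(3*x^6+5*x^4+195*x^2+7605) := by
    apply mul_pos (by linarith); positivity
  have hid : 192000 * Uf x = (39 - x^2)*(3*x^6+5*x^4+195*x^2+7605) := by
    simp only [Uf]; ring
  linarith

lemma sqrt39sq : Real.sqrt 39 ^ 2 = 39 := Real.sq_sqrt (by norm_num)
lemma sqrt28sq : Real.sqrt 28 ^ 2 = 28 := Real.sq_sqrt (by norm_num)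

lemma sq_lt_39 {x : ℝ} (hx : x ∈ Ioo (-Real.sqrt 39) (Real.sqrt 39)) : x^2 < 39 := by
  obtain ⟨h1, h2⟩ := hx
  nlinarith [Real.sqrt_nonneg 39, sqrt39sq]

lemma hYd {x : ℝ} (hx : x ∈ Ioo (-Real.sqrt 39) (Real.sqrt 39)) :
    HasDerivAt Yf (Y1f x) x := by
  have hpos := Upos (sq_lt_39 hx)
  exact (hUd x).sqrt hpos.ne'

lemma hY1d {x : ℝ} (hx : x ∈ Ioo (-Real.sqrt 39) (Real.sqrt 39)) :
    HasDerivAt Y1f (Y2f x) x := by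
  have hpos := Upos (sq_lt_39 hx)
  have hs : 0 < Real.sqrt (Uf x) := Real.sqrt_pos.mpr hpos
  have hden : HasDerivAt (fun z => 2*Real.sqrt (Uf z)) (2*(U1f x/(2*Real.sqrt (Uf x)))) x :=
    ((hUd x).sqrt hpos.ne').const_mul 2
  have hq := (hU1d x).div hden (by positivity)
  refine hq.congr_deriv ?_
  have hs2 : Real.sqrt (Uf x)^2 = Uf x := Real.sq_sqrt hpos.le
  simp only [Y2f]
  set s := Real.sqrt (Uf x) with hsdef
  rw [← hs2]
  field_simp
  ring

lemma Ua : Uf (-Real.sqrt 39) = 0 := by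
  have h6 : (-Real.sqrt 39)^6 = ((Real.sqrt 39)^2)^3 := by ring
  have h8 : (-Real.sqrt 39)^8 = ((Real.sqrt 39)^2)^4 := by ring
  simp only [Uf, h6, h8, sqrt39sq]; norm_num

lemma Ub : Uf (Real.sqrt 39) = 0 := by
  have h6 : (Real.sqrt 39)^6 = ((Real.sqrt 39)^2)^3 := by ring
  have h8 : (Real.sqrt 39)^8 = ((Real.sqrt 39)^2)^4 := by ring
  simp only [Uf, h6, h8, sqrt39sq]; norm_num

lemma U1a : U1f (-Real.sqrt 39) = (16731/8000)*Real.sqrt 39 := by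
  have h5 : (-Real.sqrt 39)^5 = ((Real.sqrt 39)^2)^2*(-Real.sqrt 39) := by ring
  have h7 : (-Real.sqrt 39)^7 = ((Real.sqrt 39)^2)^3*(-Real.sqrt 39) := by ring
  simp only [U1f, h5, h7, sqrt39sq]; ring

lemma U1b : U1f (Real.sqrt 39) = -((16731/8000)*Real.sqrt 39) := by
  have h5 : (Real.sqrt 39)^5 = ((Real.sqrt 39)^2)^2*(Real.sqrt 39) := by ring
  have h7 : (Real.sqrt 39)^7 = ((Real.sqrt 39)^2)^3*(Real.sqrt 39) := by ring
  simp only [U1f, h5, h7, sqrt39sq]; ring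

lemma habl : -Real.sqrt 39 < Real.sqrt 39 := by
  have := Real.sqrt_pos.mpr (show (0:ℝ) < 39 by norm_num); linarith

lemma tendsto_top : Tendsto Y1f (nhdsWithin (-Real.sqrt 39) (Ioi (-Real.sqrt 39))) atTop := by
  set a := -Real.sqrt 39
  have hDpos : 0 < U1f a := by
    rw [U1a]
    have := Real.sqrt_pos.mpr (show (0:ℝ) < 39 by norm_num)
    positivity
  have hnum : Tendsto U1f (nhdsWithin a (Ioi a)) (nhds (U1f a)) :=
    (U1cont.tendsto a).mono_left nhdsWithin_le_nhds
  have hden0 : Tendsto (fun x => 2*Real.sqrt (Uf x)) (nhdsWithin a (Ioi a))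
      (nhdsWithin 0 (Ioi 0)) := by
    rw [tendsto_nhdsWithin_iff]
    constructor
    · have h : Tendsto (fun x => 2*Real.sqrt (Uf x)) (nhds a)
          (nhds (2*Real.sqrt (Uf a))) :=
        (continuous_const.mul (Real.continuous_sqrt.comp Ucont)).tendsto a
      rw [Ua] at h; simpa using h.mono_left nhdsWithin_le_nhds
    · filter_upwards [Ioo_mem_nhdsGT_of_mem (⟨le_refl a, habl⟩ : a ∈ Ico a (Real.sqrt 39))]
        with x hx
      have h1 := Upos (sq_lt_39 hx)
      have h2 : 0 < Real.sqrt (Uf x) := Real.sqrt_pos.mpr h1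
      simp only [mem_Ioi]; linarith
  have hinv : Tendsto (fun x => (2*Real.sqrt (Uf x))⁻¹) (nhdsWithin a (Ioi a)) atTop :=
    tendsto_inv_nhdsGT_zero.comp hden0
  have h := hnum.pos_mul_atTop hDpos hinv
  have heq : Y1f = fun x => U1f x * (2*Real.sqrt (Uf x))⁻¹ := by
    funext x; rw [Y1f, div_eq_mul_inv]
  rw [heq]; exact h

lemma tendsto_bot : Tendsto Y1f (nhdsWithin (Real.sqrt 39) (Iio (Real.sqrt 39))) atBot := by
  set b := Real.sqrt 39
  have hDneg : U1f b < 0 := by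
    rw [U1b]
    have := Real.sqrt_pos.mpr (show (0:ℝ) < 39 by norm_num)
    nlinarith
  have hnum : Tendsto U1f (nhdsWithin b (Iio b)) (nhds (U1f b)) :=
    (U1cont.tendsto b).mono_left nhdsWithin_le_nhds
  have hden0 : Tendsto (fun x => 2*Real.sqrt (Uf x)) (nhdsWithin b (Iio b))
      (nhdsWithin 0 (Ioi 0)) := by
    rw [tendsto_nhdsWithin_iff]
    constructor
    · have h : Tendsto (fun x => 2*Real.sqrt (Uf x)) (nhds b)
          (nhds (2*Real.sqrt (Uf b))) :=
        (continuous_const.mul (Real.continuous_sqrt.comp Ucont)).tendsto b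
      rw [Ub] at h; simpa using h.mono_left nhdsWithin_le_nhds
    · filter_upwards [Ioo_mem_nhdsLT_of_mem (⟨habl, le_refl b⟩ : b ∈ Ioc (-Real.sqrt 39) b)]
        with x hx
      have h1 := Upos (sq_lt_39 hx)
      have h2 : 0 < Real.sqrt (Uf x) := Real.sqrt_pos.mpr h1
      simp only [mem_Ioi]; linarith
  have hinv : Tendsto (fun x => (2*Real.sqrt (Uf x))⁻¹) (nhdsWithin b (Iio b)) atTop :=
    tendsto_inv_nhdsGT_zero.comp hden0
  have h := hnum.neg_mul_atTop hDneg hinv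
  have heq : Y1f = fun x => U1f x * (2*Real.sqrt (Uf x))⁻¹ := by
    funext x; rw [Y1f, div_eq_mul_inv]
  rw [heq]; exact h

lemma U2lt {x : ℝ} : U2f x < 2 := by
  have h1 : 0 ≤ x^2*(3*x^2-40)^2 := mul_nonneg (sq_nonneg x) (sq_nonneg _)
  have h2 : 0 ≤ (3*x^2-40)^2 := sq_nonneg _
  simp only [U2f]; nlinarith

lemma meanconvex {x : ℝ} (hx : x^2 < 39) {n : ℕ} (hn : 2 ≤ n) :
    Y2f x / (1 + Y1f x ^ 2) < ((n:ℝ) - 1) / Yf x := by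
  have hu := Upos hx
  have hs : 0 < Real.sqrt (Uf x) := Real.sqrt_pos.mpr hu
  have hn1 : (1:ℝ) ≤ (n:ℝ) - 1 := by
    have : (2:ℝ) ≤ (n:ℝ) := by exact_mod_cast hn
    linarith
  have hden : (0:ℝ) < 1 + Y1f x ^ 2 := by positivity
  have hRpos : 0 < ((n:ℝ) - 1) / Yf x := div_pos (by linarith) (by simpa [Yf] using hs)
  rcases le_or_gt (Y2f x) 0 with hY2 | hY2
  · exact lt_of_le_of_lt (div_nonpos_of_nonpos_of_nonneg hY2 hden.le) hRpos
  · have h1 : Y2f x / (1 + Y1f x ^ 2) ≤ Y2f x := by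
      apply div_le_self hY2.le; nlinarith [sq_nonneg (Y1f x)]
    have h2 : Y2f x ≤ U2f x / (2*Real.sqrt (Uf x)) := by
      have : 0 ≤ (U1f x)^2/(4*Uf x*Real.sqrt (Uf x)) := by positivity
      simp only [Y2f]; linarith
    have h3 : U2f x / (2*Real.sqrt (Uf x)) < 2 / (2*Real.sqrt (Uf x)) := by
      gcongr
      exact U2lt
    have h4 : (2:ℝ) / (2*Real.sqrt (Uf x)) = 1 / Real.sqrt (Uf x) := by
      field_simp
    have h5 : 1 / Real.sqrt (Uf x) ≤ ((n:ℝ) - 1) / Yf x := by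
      simp only [Yf]; gcongr
    calc Y2f x / (1 + Y1f x ^ 2) ≤ Y2f x := h1
      _ ≤ U2f x / (2*Real.sqrt (Uf x)) := h2
      _ < 2 / (2*Real.sqrt (Uf x)) := h3
      _ = 1 / Real.sqrt (Uf x) := h4
      _ ≤ ((n:ℝ) - 1) / Yf x := h5

lemma Y1nonneg {x : ℝ} (hx2 : x ≤ -Real.sqrt 28) : 0 ≤ Y1f x := by
  have hxneg : x < 0 := by
    have := Real.sqrt_pos.mpr (show (0:ℝ) < 28 by norm_num); linarith
  have hx28 : 28 ≤ x^2 := by nlinarith [sqrt28sq, Real.sqrt_nonneg 28]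
  have hU1 : 0 ≤ U1f x := by
    have hid : U1f x = x^5*(28-x^2)/8000 := by simp only [U1f]; ring
    rw [hid]
    have h5 : x^5 ≤ 0 := by nlinarith [sq_nonneg (x^2)]
    have : 0 ≤ x^5*(28-x^2) := by
      nlinarith [mul_nonneg (neg_nonneg.mpr h5) (show (0:ℝ) ≤ x^2 - 28 by linarith)]
    linarith
  have : 0 ≤ Real.sqrt (Uf x) := Real.sqrt_nonneg _
  simp only [Y1f]; positivity

lemma Y1nonpos {x : ℝ} (hx1 : Real.sqrt 28 ≤ x) : Y1f x ≤ 0 := by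
  have hxpos : 0 < x := by
    have := Real.sqrt_pos.mpr (show (0:ℝ) < 28 by norm_num); linarith
  have hx28 : 28 ≤ x^2 := by nlinarith [sqrt28sq, Real.sqrt_nonneg 28]
  have hU1 : U1f x ≤ 0 := by
    have hid : U1f x = x^5*(28-x^2)/8000 := by simp only [U1f]; ring
    rw [hid]
    have h5 : 0 ≤ x^5 := by positivity
    have : x^5*(28-x^2) ≤ 0 := mul_nonpos_of_nonneg_of_nonpos h5 (by linarith)
    linarith
  simp only [Y1f]
  apply div_nonpos_of_nonpos_of_nonneg hU1 (by positivity)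

lemma Y1alpha : Y1f (-Real.sqrt 28) = 0 := by
  have hid : U1f (-Real.sqrt 28) = (-Real.sqrt 28)^5*(28-(-Real.sqrt 28)^2)/8000 := by
    simp only [U1f]; ring
  have h2 : (-Real.sqrt 28)^2 = 28 := by rw [neg_pow]; simp [sqrt28sq]
  simp only [Y1f, hid, h2]; norm_num

lemma Y1beta : Y1f (Real.sqrt 28) = 0 := by
  have hid : U1f (Real.sqrt 28) = (Real.sqrt 28)^5*(28-(Real.sqrt 28)^2)/8000 := by
    simp only [U1f]; ring
  simp only [Y1f, hid, sqrt28sq]; norm_num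

lemma Ueven (x : ℝ) : Uf (-x) = Uf x := by simp only [Uf]; ring
lemma U1odd (x : ℝ) : U1f (-x) = -(U1f x) := by simp only [U1f]; ring
lemma Yeven (x : ℝ) : Yf (-x) = Yf x := by simp only [Yf, Ueven]
lemma Y1odd (x : ℝ) : Y1f (-x) = -(Y1f x) := by
  simp only [Y1f, Ueven, U1odd]; rw [neg_div]

lemma hkey : Yf (Real.sqrt 18) < Real.sqrt 18 * Y1f (Real.sqrt 18) := by
  set t := Real.sqrt 18 with ht
  have h2 : t^2 = 18 := Real.sq_sqrt (by norm_num)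
  have hU : Uf t = 634851/192000 := by
    have h6 : t^6 = (t^2)^3 := by ring
    have h8 : t^8 = (t^2)^4 := by ring
    simp only [Uf, h6, h8, h2]; norm_num
  have hU1 : U1f t = (81/200)*t := by
    have h5 : t^5 = (t^2)^2*t := by ring
    have h7 : t^7 = (t^2)^3*t := by ring
    simp only [U1f, h5, h7, h2]; ring
  have hs : 0 < Real.sqrt (Uf t) := Real.sqrt_pos.mpr (by rw [hU]; norm_num)
  have hs2 : Real.sqrt (Uf t)^2 = Uf t := Real.sq_sqrt (by rw [hU]; norm_num)
  simp only [Yf, Y1f, hU1]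
  rw [show t*((81/200)*t/(2*Real.sqrt (Uf t))) = (81/200)*t^2/(2*Real.sqrt (Uf t)) by ring, h2]
  rw [lt_div_iff₀ (by positivity)]
  nlinarith [hs2, hU]

lemma Ubound {x : ℝ} (hx : x^2 ≤ 28) : Uf x + U1f x^2/4 ≤ 1064851/192000 := by
  have hA : 911251/192000 - Uf x = (x^2-28)^2*(3*x^4+56*x^2+784)/192000 := by
    simp only [Uf]; ring
  have hApos : 0 ≤ (x^2-28)^2*(3*x^4+56*x^2+784)/192000 := by positivity
  have hBid : U1f x^2/4 = x^10*(28-x^2)^2/256000000 := by simp only [U1f]; ring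
  have h28 : (0:ℝ) ≤ 28 - x^2 := by linarith
  have hq : 0 ≤ (x^2-20)^2*(x^8*(28-x^2)+12*x^6*(28-x^2)+80*x^4*(28-x^2)
      +1600*x^4+51200*x^2+512000) := by
    apply mul_nonneg (sq_nonneg _)
    have h1 : 0 ≤ x^8*(28-x^2) := mul_nonneg (by positivity) h28
    have h2 : 0 ≤ x^6*(28-x^2) := mul_nonneg (by positivity) h28
    have h3 : 0 ≤ x^4*(28-x^2) := mul_nonneg (by positivity) h28
    positivity
  have hid2 : 204800000 - x^10*(28-x^2)^2 = (x^2-20)^2*(x^8*(28-x^2)+12*x^6*(28-x^2)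
      +80*x^4*(28-x^2)+1600*x^4+51200*x^2+512000) := by ring
  have hB : x^10*(28-x^2)^2 ≤ 204800000 := by linarith
  rw [hBid]
  linarith

lemma Ulower {x : ℝ} (hx : x^2 ≤ 28) : 19773/12800 ≤ Uf x := by
  have hid : Uf x - 19773/12800 = x^6*(112-3*x^2)/192000 := by simp only [Uf]; ring
  have : 0 ≤ x^6*(112-3*x^2)/192000 := by
    apply div_nonneg _ (by norm_num)
    exact mul_nonneg (by positivity) (by linarith)
  linarith

lemma two_le_K {n : ℕ} (hn : 2 ≤ n) : (2:ℝ) ≤ (n:ℝ) ^ ((n:ℝ) / (2 * ((n:ℝ) - 1))) := by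
  rcases lt_or_ge n 4 with h4 | h4
  · interval_cases n
    · norm_num
    · have he : ((3:ℕ):ℝ) / (2*(((3:ℕ):ℝ) - 1)) = 3/4 := by norm_num
      rw [he]
      by_contra hc
      push_neg at hc
      have hx0 : (0:ℝ) ≤ (3:ℝ)^((3:ℝ)/4) := Real.rpow_nonneg (by norm_num) _
      have hp : ((3:ℝ)^((3/4):ℝ))^(4:ℕ) < 2^(4:ℕ) := by
        apply pow_lt_pow_left₀ hc hx0
        norm_num
      have hq : ((3:ℝ)^((3/4):ℝ))^(4:ℕ) = 27 := by
        rw [← Real.rpow_natCast ((3:ℝ)^((3/4):ℝ)) 4, ← Real.rpow_mul (by norm_num)]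
        norm_num
      rw [hq] at hp; norm_num at hp
  · have hn1 : (1:ℝ) ≤ (n:ℝ) := by
      have : (4:ℝ) ≤ (n:ℝ) := by exact_mod_cast h4
      linarith
    have h4r : (4:ℝ) ≤ (n:ℝ) := by exact_mod_cast h4
    have hexp : (1/2:ℝ) ≤ (n:ℝ) / (2 * ((n:ℝ) - 1)) := by
      rw [le_div_iff₀ (by linarith : (0:ℝ) < 2*((n:ℝ)-1))]
      linarith
    have step1 : ((n:ℝ))^((1/2:ℝ)) ≤ (n:ℝ) ^ ((n:ℝ) / (2 * ((n:ℝ) - 1))) :=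
      Real.rpow_le_rpow_of_exponent_le hn1 hexp
    have step2 : (2:ℝ) ≤ ((n:ℝ))^((1/2:ℝ)) := by
      have h42 : ((4:ℝ))^((1/2:ℝ)) = 2 := by
        rw [show (4:ℝ) = 2^(2:ℕ) by norm_num, ← Real.rpow_natCast 2 2,
          ← Real.rpow_mul (by norm_num)]
        norm_num
      exact le_trans (le_of_eq h42.symm) (Real.rpow_le_rpow (by norm_num) h4r (by norm_num))
    linarith

lemma tangent (p : ℝ × ℝ) (ρ : ℝ) (hρ : ρ = 1 ∨ ρ = -1) (t : ℝ)
    (ht : t ∈ Ioo (-Real.sqrt 39) (Real.sqrt 39))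
    (hseg : ∀ s ∈ Icc (0:ℝ) 1,
      ρ * ((1-s)*p.2 + s*(ρ*Yf t)) ≤ Yf ((1-s)*p.1 + s*t)) :
    ρ * p.2 ≤ Yf t + Y1f t * (p.1 - t) := by
  have hρ2 : ρ^2 = 1 := by rcases hρ with h|h <;> rw [h] <;> norm_num
  set g : ℝ → ℝ := fun s => Yf ((1-s)*p.1 + s*t) - ρ * ((1-s)*p.2 + s*(ρ*Yf t)) with hg
  have hg1 : g 1 = 0 := by
    simp only [hg]
    have h1 : ((1:ℝ)-1)*p.1 + 1*t = t := by ring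
    rw [h1]; rcases hρ with h|h <;> rw [h] <;> ring
  have hinner : HasDerivAt (fun s : ℝ => (1-s)*p.1 + s*t) (t - p.1) 1 := by
    have h := (((hasDerivAt_id (1:ℝ)).const_sub 1).mul_const p.1).add
      ((hasDerivAt_id (1:ℝ)).mul_const t)
    refine h.congr_deriv ?_
    ring
  have hYt : HasDerivAt Yf (Y1f t) ((1-(1:ℝ))*p.1 + 1*t) := by
    have heq : ((1:ℝ)-1)*p.1 + 1*t = t := by ring
    rw [heq]; exact hYd ht
  have hcomp : HasDerivAt (fun s : ℝ => Yf ((1-s)*p.1 + s*t)) (Y1f t * (t - p.1)) 1 :=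
    HasDerivAt.comp (h₂ := Yf) 1 hYt hinner
  have haff : HasDerivAt (fun s : ℝ => ρ * ((1-s)*p.2 + s*(ρ*Yf t)))
      (ρ * (-p.2 + ρ*Yf t)) 1 := by
    have h := ((((hasDerivAt_id (1:ℝ)).const_sub 1).mul_const p.2).add
      ((hasDerivAt_id (1:ℝ)).mul_const (ρ*Yf t))).const_mul ρ
    refine h.congr_deriv ?_
    ring
  have hgd : HasDerivAt g (Y1f t * (t - p.1) - ρ * (-p.2 + ρ*Yf t)) 1 := hcomp.sub haff
  have hslope : Tendsto (slope g 1) (nhdsWithin 1 (Iio 1))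
      (nhds (Y1f t * (t - p.1) - ρ * (-p.2 + ρ*Yf t))) :=
    (hasDerivAt_iff_tendsto_slope.mp hgd).mono_left
      (nhdsWithin_mono _ (fun x hx => ne_of_lt hx))
  have hle : Y1f t * (t - p.1) - ρ * (-p.2 + ρ*Yf t) ≤ 0 := by
    refine le_of_tendsto hslope ?_
    filter_upwards [Ioo_mem_nhdsLT_of_mem (⟨zero_lt_one, le_refl 1⟩ : (1:ℝ) ∈ Ioc 0 1)]
      with s hs
    have hg0 : 0 ≤ g s := by
      have := hseg s ⟨hs.1.le, hs.2.le⟩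
      simp only [hg]; linarith
    have hsl : slope g 1 s = (g s - g 1) / (s - 1) := slope_def_field g 1 s
    rw [hsl, hg1]
    apply div_nonpos_of_nonneg_of_nonpos (by linarith) (by linarith [hs.2])
  have hexp : ρ * (-p.2 + ρ*Yf t) = -(ρ*p.2) + Yf t := by
    linear_combination Yf t * hρ2
  linarith [hle, hexp]


/-- Proposition A.2: for every `n ≥ 2` there is a generating graph
`y : (a,b) → (0,∞)` of a closed `C²` hypersurface of revolution `N₀ ⊂ ℝ^{n+1}` which
(i) closes up at the axis, (ii) has `H > 0` (`y''/(1+y'²) < (n-1)/y`), (iii) has bridge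
`[α,β]`, (iv) is admissible (`max_{L̄₀} p / min_{L̄₀} p < n^{n/(2(n-1))}`, i.e.
`max y√(1+y'²) < n^{n/(2(n-1))} min y` over `[α,β]`), and (v) whose enclosed planar region
is not star-shaped with respect to any of its points. -/
theorem exists_nonstarshaped_admissible (n : ℕ) (hn : 2 ≤ n) :
    ∃ (a α β b : ℝ) (y y' y'' : ℝ → ℝ),
      a < α ∧ α < β ∧ β < b ∧
      ContinuousOn y (Icc a b) ∧
      y a = 0 ∧ y b = 0 ∧
      (∀ x ∈ Ioo a b, 0 < y x) ∧
      (∀ x ∈ Ioo a b, HasDerivAt y (y' x) x) ∧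
      (∀ x ∈ Ioo a b, HasDerivAt y' (y'' x) x) ∧
      ContinuousOn y'' (Ioo a b) ∧
      Tendsto y' (nhdsWithin a (Ioi a)) atTop ∧
      Tendsto y' (nhdsWithin b (Iio b)) atBot ∧
      (∀ x ∈ Ioo a b, y'' x / (1 + y' x ^ 2) < ((n : ℝ) - 1) / y x) ∧
      (∀ x ∈ Ioc a α, 0 ≤ y' x) ∧
      (∀ x ∈ Ico β b, y' x ≤ 0) ∧
      y' α = 0 ∧ y' β = 0 ∧
      sSup ((fun x => y x * Real.sqrt (1 + y' x ^ 2)) '' Icc α β) <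
        (n : ℝ) ^ ((n : ℝ) / (2 * ((n : ℝ) - 1))) * sInf (y '' Icc α β) ∧
      ¬ ∃ p ∈ {q : ℝ × ℝ | q.1 ∈ Icc a b ∧ |q.2| ≤ y q.1},
        ∀ q ∈ {q : ℝ × ℝ | q.1 ∈ Icc a b ∧ |q.2| ≤ y q.1},
          segment ℝ p q ⊆ {q : ℝ × ℝ | q.1 ∈ Icc a b ∧ |q.2| ≤ y q.1} := by
  have h2839 : Real.sqrt 28 < Real.sqrt 39 := Real.sqrt_lt_sqrt (by norm_num) (by norm_num)
  have h28pos : 0 < Real.sqrt 28 := Real.sqrt_pos.mpr (by norm_num)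
  refine ⟨-Real.sqrt 39, -Real.sqrt 28, Real.sqrt 28, Real.sqrt 39, Yf, Y1f, Y2f,
    by linarith, by linarith, h2839,
    (Real.continuous_sqrt.comp Ucont).continuousOn,
    by simp [Yf, Ua], by simp [Yf, Ub],
    fun x hx => Real.sqrt_pos.mpr (Upos (sq_lt_39 hx)),
    fun x hx => hYd hx,
    fun x hx => hY1d hx,
    ?_, tendsto_top, tendsto_bot,
    fun x hx => meanconvex (sq_lt_39 hx) hn,
    fun x hx => Y1nonneg hx.2,
    fun x hx => Y1nonpos hx.1,
    Y1alpha, Y1beta, ?_, ?_⟩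
  · -- continuity of Y2f on Ioo
    apply ContinuousOn.sub
    · apply ContinuousOn.div U2cont.continuousOn
        ((continuous_const.mul (Real.continuous_sqrt.comp Ucont)).continuousOn)
      intro x hx
      have h2 : 0 < Real.sqrt (Uf x) := Real.sqrt_pos.mpr (Upos (sq_lt_39 hx))
      simp only [Pi.mul_apply, Function.comp_apply]
      exact ne_of_gt (by linarith)
    · apply ContinuousOn.div (U1cont.pow 2).continuousOn
        (((continuous_const.mul Ucont).mul (Real.continuous_sqrt.comp Ucont)).continuousOn)
      intro x hx
      have h1 := Upos (sq_lt_39 hx)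
      have h2 : 0 < Real.sqrt (Uf x) := Real.sqrt_pos.mpr h1
      simp only [Pi.mul_apply, Function.comp_apply]
      exact ne_of_gt (by nlinarith)
  · -- admissibility
    have hαβ : -Real.sqrt 28 ≤ Real.sqrt 28 := by linarith
    have hbound : ∀ z ∈ (fun x => Yf x * Real.sqrt (1 + Y1f x ^ 2)) ''
        Icc (-Real.sqrt 28) (Real.sqrt 28), z ≤ Real.sqrt (1064851/192000) := by
      rintro z ⟨x, hx, rfl⟩
      have hx28 : x^2 ≤ 28 := by
        obtain ⟨h1, h2⟩ := hx
        nlinarith [sqrt28sq, Real.sqrt_nonneg 28]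
      have hu : 0 < Uf x := Upos (by nlinarith)
      have hs : 0 < Real.sqrt (Uf x) := Real.sqrt_pos.mpr hu
      have hs2 : Real.sqrt (Uf x)^2 = Uf x := Real.sq_sqrt hu.le
      have heq : Yf x * Real.sqrt (1 + Y1f x^2) = Real.sqrt (Uf x + U1f x^2/4) := by
        rw [Yf, ← Real.sqrt_mul hu.le]
        congr 1
        have h4 : (2*Real.sqrt (Uf x))^2 = 4*Uf x := by rw [mul_pow, hs2]; ring
        simp only [Y1f, div_pow]
        rw [h4]
        field_simp
      show Yf x * Real.sqrt (1 + Y1f x ^ 2) ≤ Real.sqrt (1064851/192000)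
      rw [heq]
      exact Real.sqrt_le_sqrt (Ubound hx28)
    have hne : (Icc (-Real.sqrt 28) (Real.sqrt 28)).Nonempty := nonempty_Icc.mpr hαβ
    have hlow : ∀ z ∈ Yf '' Icc (-Real.sqrt 28) (Real.sqrt 28),
        Real.sqrt (19773/12800) ≤ z := by
      rintro z ⟨x, hx, rfl⟩
      have hx28 : x^2 ≤ 28 := by
        obtain ⟨h1, h2⟩ := hx
        nlinarith [sqrt28sq, Real.sqrt_nonneg 28]
      exact Real.sqrt_le_sqrt (Ulower hx28)
    have h1 : sSup ((fun x => Yf x * Real.sqrt (1 + Y1f x ^ 2)) ''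
        Icc (-Real.sqrt 28) (Real.sqrt 28)) ≤ Real.sqrt (1064851/192000) :=
      Real.sSup_le hbound (Real.sqrt_nonneg _)
    have h2 : Real.sqrt (19773/12800) ≤ sInf (Yf '' Icc (-Real.sqrt 28) (Real.sqrt 28)) :=
      le_csInf (hne.image _) hlow
    have h3 : Real.sqrt (1064851/192000) < 2*Real.sqrt (19773/12800) := by
      have he : (2:ℝ)*Real.sqrt (19773/12800) = Real.sqrt (4*(19773/12800)) := by
        rw [show (4:ℝ)*(19773/12800) = 2^2*(19773/12800) by norm_num,
          Real.sqrt_mul (by norm_num) _, Real.sqrt_sq (by norm_num)]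
      rw [he]
      exact Real.sqrt_lt_sqrt (by norm_num) (by norm_num)
    have h4 := two_le_K hn
    calc sSup ((fun x => Yf x * Real.sqrt (1 + Y1f x ^ 2)) ''
          Icc (-Real.sqrt 28) (Real.sqrt 28))
        ≤ Real.sqrt (1064851/192000) := h1
      _ < 2*Real.sqrt (19773/12800) := h3
      _ ≤ (n:ℝ) ^ ((n:ℝ) / (2 * ((n:ℝ) - 1))) *
          sInf (Yf '' Icc (-Real.sqrt 28) (Real.sqrt 28)) := by
          apply mul_le_mul h4 h2 (Real.sqrt_nonneg _) (by linarith)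
  · -- not star-shaped
    rintro ⟨p, hpE, hvis⟩
    have hsub : ∀ (ρ : ℝ), ρ = 1 ∨ ρ = -1 → ∀ (t : ℝ),
        t ∈ Ioo (-Real.sqrt 39) (Real.sqrt 39) →
        ρ * p.2 ≤ Yf t + Y1f t * (p.1 - t) := by
      intro ρ hρ t ht
      have hqE : ((t, ρ * Yf t) : ℝ × ℝ) ∈ {q : ℝ × ℝ |
          q.1 ∈ Icc (-Real.sqrt 39) (Real.sqrt 39) ∧ |q.2| ≤ Yf q.1} := by
        refine ⟨⟨ht.1.le, ht.2.le⟩, ?_⟩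
        show |ρ * Yf t| ≤ Yf t
        rcases hρ with h|h <;> rw [h] <;>
          simp [abs_of_nonneg, Real.sqrt_nonneg, Yf]
      have hseg := hvis _ hqE
      apply tangent p ρ hρ t ht
      intro s hs
      have hmem : ((1-s) • p + s • ((t, ρ*Yf t) : ℝ × ℝ)) ∈
          segment ℝ p (t, ρ*Yf t) :=
        ⟨1-s, s, by linarith [hs.2], hs.1, by ring, rfl⟩
      have h2 := (hseg hmem).2
      have hfst : ((1-s) • p + s • ((t, ρ*Yf t) : ℝ × ℝ)).1 = (1-s)*p.1 + s*t := by
        simp [Prod.fst_add, Prod.smul_fst, smul_eq_mul]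
      have hsnd : ((1-s) • p + s • ((t, ρ*Yf t) : ℝ × ℝ)).2 = (1-s)*p.2 + s*(ρ*Yf t) := by
        simp [Prod.snd_add, Prod.smul_snd, smul_eq_mul]
      rw [hfst, hsnd] at h2
      calc ρ * ((1-s)*p.2 + s*(ρ*Yf t)) ≤ |(1-s)*p.2 + s*(ρ*Yf t)| := by
            rcases hρ with h|h <;> rw [h]
            · linarith [le_abs_self ((1-s)*p.2 + s*((1:ℝ)*Yf t))]
            · linarith [neg_le_abs ((1-s)*p.2 + s*((-1:ℝ)*Yf t))]
        _ ≤ Yf ((1-s)*p.1 + s*t) := h2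
    have h1839 : Real.sqrt 18 < Real.sqrt 39 := Real.sqrt_lt_sqrt (by norm_num) (by norm_num)
    have h18nn : 0 ≤ Real.sqrt 18 := Real.sqrt_nonneg 18
    have h39pos : 0 < Real.sqrt 39 := Real.sqrt_pos.mpr (by norm_num)
    have ht1 : Real.sqrt 18 ∈ Ioo (-Real.sqrt 39) (Real.sqrt 39) :=
      ⟨by linarith, h1839⟩
    have ht1' : -Real.sqrt 18 ∈ Ioo (-Real.sqrt 39) (Real.sqrt 39) :=
      ⟨by linarith, by linarith⟩
    have ha1 := hsub 1 (Or.inl rfl) (Real.sqrt 18) ht1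
    have ha2 := hsub (-1) (Or.inr rfl) (Real.sqrt 18) ht1
    have ha3 := hsub 1 (Or.inl rfl) (-Real.sqrt 18) ht1'
    have ha4 := hsub (-1) (Or.inr rfl) (-Real.sqrt 18) ht1'
    rw [Yeven, Y1odd] at ha3 ha4
    nlinarith [hkey, ha1, ha2, ha3, ha4]
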